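/- arXiv:1710.11064 — 2 statements merged into one kernel-verified Lean document; each statement's English description precedes it below -/
import Mathlib

section
/- For a sequence of random graphs G_n on vertex sets V_n with |V_n| → ∞, in which the degree random variables are exchangeable in pairs (i.e., (D_{n,k}, D_{n,ℓ}) has the same distribution as (D_{n,1}, D_{n,2}) for all k ≠ ℓ), the fraction P_n(d) of nodes with degree d satisfies P_n(d) → L(d) in probability for a constant L(d) if and only if P(D_{n,1} = d) → L(d) and Cov[1{D_{n,1}=d}, 1{D_{n,2}=d}] → 0. -/
open MeasureTheory ProbabilityTheory Filter Topology

/-- For a sequence of random graphs whose degree rvs are exchangeable in pairs,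
with `|V_n| → ∞`, the fraction `P_n(d)` of nodes of degree `d` converges in probability to a
constant `L d` iff `P(D_{n,1} = d) → L d` and `Cov[1{D_{n,1}=d}, 1{D_{n,2}=d}] → 0`. -/
theorem stmt1 {Ω : Type*} [MeasurableSpace Ω] (μ : Measure Ω) [IsProbabilityMeasure μ]
    (V : ℕ → ℕ) (hV : ∀ n, 2 ≤ V n) (hVtop : Tendsto V atTop atTop)
    (D : ℕ → ℕ → Ω → ℕ) (hDmeas : ∀ n k, Measurable (D n k))
    (hhom : ∀ n k l, k < V n → l < V n → k ≠ l →
      IdentDistrib (fun ω => (D n k ω, D n l ω)) (fun ω => (D n 0 ω, D n 1 ω)) μ μ)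
    (d : ℕ) (L : ℝ) :
    TendstoInMeasure μ
        (fun n ω => (∑ k ∈ Finset.range (V n), if D n k ω = d then (1 : ℝ) else 0) / V n)
        atTop (fun _ => L) ↔
      (Tendsto (fun n => (μ {ω | D n 0 ω = d}).toReal) atTop (𝓝 L) ∧
        Tendsto (fun n =>
            (∫ ω, (if D n 0 ω = d then (1 : ℝ) else 0) * (if D n 1 ω = d then (1 : ℝ) else 0) ∂μ)
              - (∫ ω, (if D n 0 ω = d then (1 : ℝ) else 0) ∂μ)
                * (∫ ω, (if D n 1 ω = d then (1 : ℝ) else 0) ∂μ))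
          atTop (𝓝 0)) := by
  -- notation
  set p : ℕ → ℝ := fun n => ∫ ω, (if D n 0 ω = d then (1 : ℝ) else 0) ∂μ with hp_def
  set q : ℕ → ℝ := fun n =>
    ∫ ω, (if D n 0 ω = d then (1 : ℝ) else 0) * (if D n 1 ω = d then (1 : ℝ) else 0) ∂μ
    with hq_def
  set S : ℕ → Ω → ℝ := fun n ω => ∑ k ∈ Finset.range (V n),
    if D n k ω = d then (1 : ℝ) else 0 with hS_def
  set P : ℕ → Ω → ℝ := fun n ω => S n ω / (V n : ℝ) with hP_def
  -- basic facts about V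
  have hVpos : ∀ n, (0 : ℝ) < (V n : ℝ) := by
    intro n; have := hV n
    exact_mod_cast Nat.lt_of_lt_of_le Nat.zero_lt_two this
  have hVne : ∀ n, ((V n : ℝ)) ≠ 0 := fun n => (hVpos n).ne'
  have hV1ne : ∀ n, ((V n : ℝ)) - 1 ≠ 0 := by
    intro n
    have h2 : (2 : ℝ) ≤ (V n : ℝ) := by exact_mod_cast hV n
    nlinarith
  -- measurability / integrability facts
  have hset : ∀ n k, MeasurableSet {ω | D n k ω = d} :=
    fun n k => hDmeas n k (measurableSet_singleton d)
  have hXmeas : ∀ n k, Measurable (fun ω => if D n k ω = d then (1 : ℝ) else 0) :=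
    fun n k => Measurable.ite (hset n k) measurable_const measurable_const
  have hXind : ∀ n k, (fun ω => if D n k ω = d then (1 : ℝ) else 0)
      = Set.indicator {ω | D n k ω = d} (fun _ => (1 : ℝ)) := by
    intro n k; funext ω
    simp [Set.indicator_apply, Set.mem_setOf_eq]
  have hXint : ∀ n k, Integrable (fun ω => if D n k ω = d then (1 : ℝ) else 0) μ := by
    intro n k; rw [hXind n k]
    exact (integrable_const 1).indicator (hset n k)
  have hXXint : ∀ n k l, Integrable
      (fun ω => (if D n k ω = d then (1 : ℝ) else 0) * (if D n l ω = d then (1 : ℝ) else 0)) μ := by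
    intro n k l
    have h : (fun ω => (if D n k ω = d then (1 : ℝ) else 0) * (if D n l ω = d then (1 : ℝ) else 0))
        = Set.indicator ({ω | D n k ω = d} ∩ {ω | D n l ω = d}) (fun _ => (1 : ℝ)) := by
      funext ω
      by_cases h1 : D n k ω = d <;> by_cases h2 : D n l ω = d <;>
        simp [Set.indicator_apply, Set.mem_setOf_eq, h1, h2]
    rw [h]
    exact (integrable_const 1).indicator ((hset n k).inter (hset n l))
  -- identical marginals
  have hmarg : ∀ n k, k < V n →
      ∫ ω, (if D n k ω = d then (1 : ℝ) else 0) ∂μ = p n := by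
    intro n k hk
    rcases eq_or_ne k 0 with rfl | hk0
    · rw [hp_def]
    · have h0 : (0 : ℕ) < V n := Nat.lt_of_lt_of_le Nat.zero_lt_two (hV n)
      have h1 : (1 : ℕ) < V n := Nat.lt_of_lt_of_le Nat.one_lt_two (hV n)
      have hl : (if k = 1 then 0 else 1) < V n := by split <;> assumption
      have hkl : k ≠ (if k = 1 then 0 else 1) := by
        split <;> omega
      have hid := (hhom n k _ hk hl hkl).comp
        (u := fun pr : ℕ × ℕ => if pr.1 = d then (1 : ℝ) else 0) (measurable_of_countable _)
      rw [hp_def]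
      simpa [Function.comp] using hid.integral_eq
  have hpair : ∀ n k l, k < V n → l < V n → k ≠ l →
      ∫ ω, (if D n k ω = d then (1 : ℝ) else 0) * (if D n l ω = d then (1 : ℝ) else 0) ∂μ
        = q n := by
    intro n k l hk hl hkl
    have hid := (hhom n k l hk hl hkl).comp
      (u := fun pr : ℕ × ℕ =>
        (if pr.1 = d then (1 : ℝ) else 0) * (if pr.2 = d then (1 : ℝ) else 0))
      (measurable_of_countable _)
    rw [hq_def]
    simpa [Function.comp] using hid.integral_eq
  -- integrability of S, P etc.
  have hSint : ∀ n, Integrable (S n) μ := by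
    intro n; rw [hS_def]
    exact integrable_finset_sum _ fun k _ => hXint n k
  have hPint : ∀ n, Integrable (P n) μ := by
    intro n; rw [hP_def]
    exact (hSint n).div_const _
  have hSSrepr : ∀ n, (fun ω => S n ω * S n ω) = fun ω =>
      ∑ k ∈ Finset.range (V n), ∑ l ∈ Finset.range (V n),
        (if D n k ω = d then (1 : ℝ) else 0) * (if D n l ω = d then (1 : ℝ) else 0) := by
    intro n; funext ω; rw [hS_def]
    exact Finset.sum_mul_sum _ _ _ _
  have hSSint : ∀ n, Integrable (fun ω => S n ω * S n ω) μ := by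
    intro n; rw [hSSrepr n]
    exact integrable_finset_sum _ fun k _ => integrable_finset_sum _ fun l _ => hXXint n k l
  have hPPint : ∀ n, Integrable (fun ω => P n ω * P n ω) μ := by
    intro n
    have h : (fun ω => P n ω * P n ω) = fun ω => (S n ω * S n ω) / ((V n : ℝ) * (V n : ℝ)) := by
      funext ω; rw [hP_def]; ring
    rw [h]
    exact (hSSint n).div_const _
  have hAint : ∀ n, Integrable (fun ω => (P n ω - L) ^ 2) μ := by
    intro n
    have h : (fun ω => (P n ω - L) ^ 2)
        = fun ω => P n ω * P n ω - (2 * L) * P n ω + L ^ 2 := by funext ω; ring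
    rw [h]
    exact ((hPPint n).sub ((hPint n).const_mul _)).add (integrable_const _)
  -- first moments
  have hES : ∀ n, ∫ ω, S n ω ∂μ = (V n : ℝ) * p n := by
    intro n; rw [hS_def]
    rw [integral_finset_sum _ fun k _ => hXint n k]
    rw [Finset.sum_congr rfl fun k hk => hmarg n k (Finset.mem_range.mp hk)]
    simp [mul_comm]
  have hIntP : ∀ n, ∫ ω, P n ω ∂μ = p n := by
    intro n; rw [hP_def]
    simp only
    rw [integral_div, hES n, mul_comm, mul_div_assoc, div_self (hVne n), mul_one]
  -- second moments
  have hESS : ∀ n, ∫ ω, S n ω * S n ω ∂μ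
      = (V n : ℝ) * p n + (V n : ℝ) * ((V n : ℝ) - 1) * q n := by
    intro n
    rw [hSSrepr n]
    rw [integral_finset_sum _ fun k _ => integrable_finset_sum _ fun l _ => hXXint n k l]
    have hterm : ∀ k ∈ Finset.range (V n),
        (∫ ω, ∑ l ∈ Finset.range (V n),
            (if D n k ω = d then (1 : ℝ) else 0) * (if D n l ω = d then (1 : ℝ) else 0) ∂μ)
          = p n + ((V n : ℝ) - 1) * q n := by
      intro k hk
      rw [integral_finset_sum _ fun l _ => hXXint n k l]
      have hterm2 : ∀ l ∈ Finset.range (V n),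
          (∫ ω, (if D n k ω = d then (1 : ℝ) else 0) * (if D n l ω = d then (1 : ℝ) else 0) ∂μ)
            = q n + (if k = l then p n - q n else 0) := by
        intro l hl
        by_cases hkl : k = l
        · subst hkl
          have hsq : (fun ω => (if D n k ω = d then (1 : ℝ) else 0)
              * (if D n k ω = d then (1 : ℝ) else 0))
              = fun ω => (if D n k ω = d then (1 : ℝ) else 0) := by
            funext ω; by_cases h : D n k ω = d <;> simp [h]
          rw [hsq, hmarg n k (Finset.mem_range.mp hk)]
          simp
        · rw [hpair n k l (Finset.mem_range.mp hk) (Finset.mem_range.mp hl) hkl]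
          simp [hkl]
      rw [Finset.sum_congr rfl hterm2, Finset.sum_add_distrib, Finset.sum_const,
        Finset.sum_ite_eq (Finset.range (V n)) k (fun _ => p n - q n), if_pos hk,
        Finset.card_range, nsmul_eq_mul]
      ring
    rw [Finset.sum_congr rfl hterm, Finset.sum_const, Finset.card_range, nsmul_eq_mul]
    ring
  have hE2 : ∀ n, ∫ ω, P n ω * P n ω ∂μ
      = ((V n : ℝ) * p n + (V n : ℝ) * ((V n : ℝ) - 1) * q n) / ((V n : ℝ) * (V n : ℝ)) := by
    intro n
    have h : (fun ω => P n ω * P n ω) = fun ω => (S n ω * S n ω) / ((V n : ℝ) * (V n : ℝ)) := by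
      funext ω; rw [hP_def]; ring
    rw [h, integral_div, hESS n]
  -- the mean square deviation
  have hAeq : ∀ n, ∫ ω, (P n ω - L) ^ 2 ∂μ
      = ((V n : ℝ) * p n + (V n : ℝ) * ((V n : ℝ) - 1) * q n) / ((V n : ℝ) * (V n : ℝ))
        - 2 * L * p n + L ^ 2 := by
    intro n
    have h : (fun ω => (P n ω - L) ^ 2)
        = fun ω => P n ω * P n ω - (2 * L) * P n ω + L ^ 2 := by funext ω; ring
    have hint2 : Integrable (fun ω => (2 * L) * P n ω) μ := (hPint n).const_mul (2 * L)
    have hint1 : Integrable (fun ω => P n ω * P n ω - (2 * L) * P n ω) μ :=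
      (hPPint n).sub hint2
    rw [h, integral_add hint1 (integrable_const _),
      integral_sub (hPPint n) hint2, integral_const_mul, hIntP n, hE2 n,
      integral_const]
    simp [measure_univ]
  -- pointwise bounds
  have hS0 : ∀ n ω, 0 ≤ S n ω := by
    intro n ω; rw [hS_def]
    exact Finset.sum_nonneg fun k _ => by split <;> norm_num
  have hS1 : ∀ n ω, S n ω ≤ (V n : ℝ) := by
    intro n ω; rw [hS_def]
    calc (∑ k ∈ Finset.range (V n), if D n k ω = d then (1 : ℝ) else 0)
        ≤ ∑ k ∈ Finset.range (V n), (1 : ℝ) :=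
          Finset.sum_le_sum fun k _ => by split <;> norm_num
      _ = (V n : ℝ) := by simp
  have hP0 : ∀ n ω, 0 ≤ P n ω := fun n ω => div_nonneg (hS0 n ω) (hVpos n).le
  have hP1 : ∀ n ω, P n ω ≤ 1 := by
    intro n ω; rw [hP_def]
    exact (div_le_one (hVpos n)).2 (hS1 n ω)
  -- limits of 1/V n etc.
  have hVr : Tendsto (fun n => (V n : ℝ)) atTop atTop :=
    tendsto_natCast_atTop_atTop.comp hVtop
  have hinv : Tendsto (fun n => ((V n : ℝ))⁻¹) atTop (𝓝 0) := hVr.inv_tendsto_atTop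
  have hVr1 : Tendsto (fun n => (V n : ℝ) - 1) atTop atTop := by
    have := tendsto_atTop_add_const_right atTop (-1 : ℝ) hVr
    simpa [sub_eq_add_neg] using this
  have hinv1 : Tendsto (fun n => ((V n : ℝ) - 1)⁻¹) atTop (𝓝 0) := hVr1.inv_tendsto_atTop
  -- relating the stated quantities to p and q
  have hptoReal : ∀ n, (μ {ω | D n 0 ω = d}).toReal = p n := by
    intro n
    rw [hp_def]
    simp only
    rw [hXind n 0, integral_indicator_const (1 : ℝ) (hset n 0)]
    simp
    rfl
  have hcov_eq : ∀ n,
      (∫ ω, (if D n 0 ω = d then (1 : ℝ) else 0) * (if D n 1 ω = d then (1 : ℝ) else 0) ∂μ)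
        - (∫ ω, (if D n 0 ω = d then (1 : ℝ) else 0) ∂μ)
          * (∫ ω, (if D n 1 ω = d then (1 : ℝ) else 0) ∂μ)
      = q n - p n * p n := by
    intro n
    rw [hmarg n 1 (Nat.lt_of_lt_of_le Nat.one_lt_two (hV n)), hq_def, hp_def]
  constructor
  · -- forward direction
    intro hTIM
    rw [tendstoInMeasure_iff_dist] at hTIM
    -- L is in [0,1]
    have hL01 : 0 ≤ L ∧ L ≤ 1 := by
      have hmax : max (-L) (L - 1) ≤ 0 := by
        by_contra hpos
        push_neg at hpos
        have hev := hTIM _ hpos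
        have hall : ∀ n, μ {x | max (-L) (L - 1) ≤ dist
            ((∑ k ∈ Finset.range (V n), if D n k x = d then (1 : ℝ) else 0) / (V n : ℝ)) L}
            = 1 := by
          intro n
          have : {x | max (-L) (L - 1) ≤ dist
              ((∑ k ∈ Finset.range (V n), if D n k x = d then (1 : ℝ) else 0) / (V n : ℝ)) L}
              = Set.univ := by
            apply Set.eq_univ_of_forall
            intro x
            have h0 := hP0 n x
            have h1 := hP1 n x
            rw [hP_def, hS_def] at h0 h1
            simp only [Set.mem_setOf_eq, Real.dist_eq]
            rcases abs_cases ((∑ k ∈ Finset.range (V n),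
                if D n k x = d then (1 : ℝ) else 0) / (V n : ℝ) - L) with ⟨heq, _⟩ | ⟨heq, _⟩ <;>
              rw [heq] <;> rcases max_cases (-L) (L - 1) with ⟨hm, _⟩ | ⟨hm, _⟩ <;>
                rw [hm] <;> linarith
          rw [this, measure_univ]
        have : Tendsto (fun _ : ℕ => (1 : ENNReal)) atTop (𝓝 0) := hev.congr hall
        exact one_ne_zero (tendsto_nhds_unique tendsto_const_nhds this)
      exact ⟨by linarith [le_of_max_le_left hmax], by linarith [le_of_max_le_right hmax]⟩
    -- L¹ convergence
    have hL1 : Tendsto (fun n => ∫ ω, |P n ω - L| ∂μ) atTop (𝓝 0) := by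
      rw [NormedAddCommGroup.tendsto_nhds_zero]
      intro ε hε
      have hhalf : (0 : ℝ) < ε / 2 := by positivity
      have hev := (hTIM (ε / 2) hhalf).eventually_lt_const
        (ENNReal.ofReal_pos.2 hhalf)
      filter_upwards [hev] with n hn
      set T : Set Ω := {x | ε / 2 ≤ dist
        ((∑ k ∈ Finset.range (V n), if D n k x = d then (1 : ℝ) else 0) / (V n : ℝ)) L}
        with hT_def
      have hTmeas : MeasurableSet T := by
        apply measurableSet_le measurable_const
        exact ((Finset.measurable_sum _ (fun k _ => hXmeas n k)).div_const _).dist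
          measurable_const
      have hpt : ∀ ω, |P n ω - L| ≤ ε / 2 + Set.indicator T (fun _ => (1 : ℝ)) ω := by
        intro ω
        by_cases hω : ω ∈ T
        · rw [Set.indicator_of_mem hω]
          have h0 := hP0 n ω
          have h1 := hP1 n ω
          rcases abs_cases (P n ω - L) with ⟨heq, _⟩ | ⟨heq, _⟩ <;> rw [heq] <;>
            [linarith [hL01.1, hhalf.le]; linarith [hL01.2, hhalf.le]]
        · rw [Set.indicator_of_notMem hω]
          rw [hT_def] at hω
          simp only [Set.mem_setOf_eq, not_le, Real.dist_eq] at hω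
          rw [hP_def, hS_def]
          simp only [add_zero]
          exact le_of_lt hω
      have hint : ∫ ω, |P n ω - L| ∂μ ≤ ε / 2 + (μ T).toReal := by
        calc ∫ ω, |P n ω - L| ∂μ
            ≤ ∫ ω, (ε / 2 + Set.indicator T (fun _ => (1 : ℝ)) ω) ∂μ :=
              integral_mono (((hPint n).sub (integrable_const L)).abs)
                ((integrable_const _).add ((integrable_const 1).indicator hTmeas))
                hpt
          _ = ε / 2 + (μ T).toReal := by
              rw [integral_add (integrable_const _) ((integrable_const 1).indicator hTmeas),
                integral_const, integral_indicator_const (1 : ℝ) hTmeas]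
              simp [measure_univ]
              rfl
      have hμT : (μ T).toReal < ε / 2 := by
        have := ENNReal.toReal_lt_toReal (measure_ne_top μ T) ENNReal.ofReal_ne_top |>.2 hn
        rwa [ENNReal.toReal_ofReal hhalf.le] at this
      have : ∫ ω, |P n ω - L| ∂μ < ε := by linarith
      rwa [Real.norm_eq_abs, abs_of_nonneg (integral_nonneg fun ω => abs_nonneg _)]
    -- convergence of the mean
    have hp : Tendsto p atTop (𝓝 L) := by
      have h1 : Tendsto (fun n => p n - L) atTop (𝓝 0) := by
        apply squeeze_zero_norm _ hL1
        intro n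
        have : p n - L = ∫ ω, (P n ω - L) ∂μ := by
          rw [integral_sub (hPint n) (integrable_const L), integral_const, hIntP n]
          simp [measure_univ]
        rw [this]
        calc ‖∫ ω, (P n ω - L) ∂μ‖ ≤ ∫ ω, ‖P n ω - L‖ ∂μ := norm_integral_le_integral_norm _
          _ = ∫ ω, |P n ω - L| ∂μ := by simp [Real.norm_eq_abs]
      have := h1.add_const L
      simpa using this
    -- convergence of the second moment
    have hE2lim : Tendsto (fun n => ∫ ω, P n ω * P n ω ∂μ) atTop (𝓝 (L * L)) := by
      have h1 : Tendsto (fun n => (∫ ω, P n ω * P n ω ∂μ) - L * L) atTop (𝓝 0) := by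
        apply squeeze_zero_norm (a := fun n => 2 * ∫ ω, |P n ω - L| ∂μ) _
          (by simpa using hL1.const_mul 2)
        intro n
        have heq : (∫ ω, P n ω * P n ω ∂μ) - L * L = ∫ ω, (P n ω * P n ω - L * L) ∂μ := by
          rw [integral_sub (hPPint n) (integrable_const _), integral_const]
          simp [measure_univ]
        rw [heq]
        calc ‖∫ ω, (P n ω * P n ω - L * L) ∂μ‖
            ≤ ∫ ω, ‖P n ω * P n ω - L * L‖ ∂μ := norm_integral_le_integral_norm _
          _ ≤ ∫ ω, 2 * |P n ω - L| ∂μ := by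
              apply integral_mono ((hPPint n).sub (integrable_const _)).norm
                (((hPint n).sub (integrable_const L)).abs.const_mul 2)
              intro ω
              simp only [Pi.sub_apply]
              have h0 := hP0 n ω
              have h1 := hP1 n ω
              have : P n ω * P n ω - L * L = (P n ω + L) * (P n ω - L) := by ring
              rw [Real.norm_eq_abs, this, abs_mul]
              have habs : |P n ω + L| ≤ 2 := by
                rw [abs_le]; constructor <;> linarith [hL01.1, hL01.2]
              have := abs_nonneg (P n ω - L)
              nlinarith
          _ = 2 * ∫ ω, |P n ω - L| ∂μ := integral_const_mul 2 _
      have := h1.add_const (L * L)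
      simpa using this
    -- convergence of q
    have hq : Tendsto q atTop (𝓝 (L * L)) := by
      have hqeq : ∀ n, q n =
          (((V n : ℝ) * p n + (V n : ℝ) * ((V n : ℝ) - 1) * q n) / ((V n : ℝ) * (V n : ℝ))
            - p n * ((V n : ℝ))⁻¹) * (1 + ((V n : ℝ) - 1)⁻¹) := by
        intro n
        have h2 := hVne n
        have h3 := hV1ne n
        field_simp
        ring
      have hE2' : Tendsto (fun n =>
          ((V n : ℝ) * p n + (V n : ℝ) * ((V n : ℝ) - 1) * q n) / ((V n : ℝ) * (V n : ℝ)))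
          atTop (𝓝 (L * L)) := hE2lim.congr fun n => hE2 n
      have T := (hE2'.sub (hp.mul hinv)).mul ((tendsto_const_nhds : Tendsto (fun _ : ℕ => (1 : ℝ)) atTop (𝓝 1)).add hinv1)
      have T2 := T.congr fun n => (hqeq n).symm
      simpa using T2
    refine ⟨hp.congr fun n => (hptoReal n).symm, ?_⟩
    have := hq.sub (hp.mul hp)
    rw [sub_self] at this
    exact this.congr fun n => (hcov_eq n).symm
  · -- backward direction
    rintro ⟨hp0, hc0⟩
    have hp : Tendsto p atTop (𝓝 L) := hp0.congr fun n => hptoReal n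
    have hc : Tendsto (fun n => q n - p n * p n) atTop (𝓝 0) := hc0.congr fun n => hcov_eq n
    -- mean square deviation tends to 0
    have hAtend : Tendsto (fun n => ∫ ω, (P n ω - L) ^ 2 ∂μ) atTop (𝓝 0) := by
      have halg : ∀ n, ∫ ω, (P n ω - L) ^ 2 ∂μ
          = p n * ((V n : ℝ))⁻¹
            + (1 - ((V n : ℝ))⁻¹) * ((q n - p n * p n) + p n * p n)
            - 2 * L * p n + L ^ 2 := by
        intro n
        rw [hAeq n]
        have h2 := hVne n
        have h3 := hV1ne n
        field_simp
        ring
      have T := (((hp.mul hinv).add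
        (((tendsto_const_nhds : Tendsto (fun _ : ℕ => (1 : ℝ)) atTop (𝓝 1)).sub hinv).mul
          (hc.add (hp.mul hp)))).sub
        (hp.const_mul (2 * L))).add_const (L ^ 2)
      have T2 : Tendsto (fun n =>
          p n * ((V n : ℝ))⁻¹
            + (1 - ((V n : ℝ))⁻¹) * ((q n - p n * p n) + p n * p n)
            - 2 * L * p n + L ^ 2) atTop
          (𝓝 ((L * 0 + ((1 : ℝ) - 0) * (0 + L * L) - 2 * L * L) + L ^ 2)) := by
        convert T using 2 <;> ring
      have T3 := T2.congr fun n => (halg n).symm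
      have hval : (L * 0 + ((1 : ℝ) - 0) * (0 + L * L) - 2 * L * L) + L ^ 2 = 0 := by ring
      rwa [hval] at T3
    -- Chebyshev
    rw [tendstoInMeasure_iff_dist]
    intro ε hε
    have hε2 : (0 : ℝ) < ε ^ 2 := by positivity
    refine tendsto_of_tendsto_of_tendsto_of_le_of_le
      (h := fun n => ENNReal.ofReal ((∫ ω, (P n ω - L) ^ 2 ∂μ) / ε ^ 2))
      (tendsto_const_nhds : Tendsto (fun _ : ℕ => (0 : ENNReal)) atTop (𝓝 0))
      ?_ (fun n => zero_le) ?_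
    · have := ENNReal.tendsto_ofReal (hAtend.div_const (ε ^ 2))
      simpa using this
    · intro n
      have hsub : {x | ε ≤ dist
          ((∑ k ∈ Finset.range (V n), if D n k x = d then (1 : ℝ) else 0) / (V n : ℝ)) L}
          ⊆ {x | ε ^ 2 ≤ (P n x - L) ^ 2} := by
        intro x hx
        simp only [Set.mem_setOf_eq, Real.dist_eq] at hx ⊢
        have h1 : ε ^ 2 ≤ |(∑ k ∈ Finset.range (V n),
            if D n k x = d then (1 : ℝ) else 0) / (V n : ℝ) - L| ^ 2 :=
          pow_le_pow_left₀ hε.le hx 2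
        rw [sq_abs] at h1
        rw [hP_def, hS_def]
        exact h1
      calc μ {x | ε ≤ dist
            ((∑ k ∈ Finset.range (V n), if D n k x = d then (1 : ℝ) else 0) / (V n : ℝ)) L}
          ≤ μ {x | ε ^ 2 ≤ (P n x - L) ^ 2} := measure_mono hsub
        _ = ENNReal.ofReal ((μ {x | ε ^ 2 ≤ (P n x - L) ^ 2}).toReal) :=
            (ENNReal.ofReal_toReal (measure_ne_top μ _)).symm
        _ ≤ ENNReal.ofReal ((∫ ω, (P n ω - L) ^ 2 ∂μ) / ε ^ 2) := by
            apply ENNReal.ofReal_le_ofReal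
            have hm := mul_meas_ge_le_integral_of_nonneg
              (ae_of_all μ fun ω => sq_nonneg (P n ω - L)) (hAint n) (ε ^ 2)
            rw [le_div_iff₀ hε2]
            rw [measureReal_def] at hm
            linarith
end

section
/- For i.i.d. Exp(λ) variables ξ_1,…,ξ_p and levels as above, as p → ∞ (with k ≤ k' fixed integers), P(S_p(u_p(x')) = k', S_p(u_p(x)) = k) converges to (e^{−kx}/k!) · ((e^{−x'} − e^{−x})^{k'−k}/(k'−k)!) · exp(−e^{−x'}), where x' ≤ x are fixed reals and u_p(y) = λ^{-1}(log p + y). -/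
open MeasureTheory ProbabilityTheory Filter Topology

open scoped ENNReal

lemma stmt13_exact {Ω : Type*} [MeasurableSpace Ω] (μ : Measure Ω) [IsProbabilityMeasure μ]
    (ξ : ℕ → Ω → ℝ) (hmeas : ∀ i, Measurable (ξ i))
    (hindep : iIndepFun ξ μ)
    (u' u : ℝ) (huu : u' ≤ u) (p k k' : ℕ)
    (q0 q1 q2 : ℝ≥0∞)
    (hq0 : ∀ i, μ (ξ i ⁻¹' Set.Iic u') = q0)
    (hq1 : ∀ i, μ (ξ i ⁻¹' Set.Ioc u' u) = q1)
    (hq2 : ∀ i, μ (ξ i ⁻¹' Set.Ioi u) = q2) :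
    μ {ω | ((Finset.range p).filter fun ℓ => u' < ξ ℓ ω).card = k' ∧
           ((Finset.range p).filter fun ℓ => u < ξ ℓ ω).card = k}
      = (p.choose k' * k'.choose k : ℕ) * (q2 ^ k * q1 ^ (k' - k) * q0 ^ (p - k')) := by
  classical
  set s : Finset ℕ → Finset ℕ → ℕ → Set ℝ := fun A' A ℓ =>
    if ℓ ∈ A then Set.Ioi u else if ℓ ∈ A' then Set.Ioc u' u else Set.Iic u' with hs
  set E : Finset ℕ → Finset ℕ → Set Ω := fun A' A => ⋂ ℓ ∈ Finset.range p, ξ ℓ ⁻¹' s A' A ℓ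
    with hEdef
  have hsm : ∀ A' A ℓ, MeasurableSet (s A' A ℓ) := by
    intro A' A ℓ
    simp only [hs]
    split_ifs <;> measurability
  have hE : ∀ A' A : Finset ℕ, A ⊆ A' → A' ⊆ Finset.range p →
      E A' A = {ω | ((Finset.range p).filter fun ℓ => u < ξ ℓ ω) = A ∧
                    ((Finset.range p).filter fun ℓ => u' < ξ ℓ ω) = A'} := by
    intro A' A hAA' hA'p
    ext ω
    simp only [hEdef, Set.mem_iInter, Set.mem_preimage, Set.mem_setOf_eq, Finset.mem_range]
    constructor
    · intro h
      constructor
      · ext ℓ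
        simp only [Finset.mem_filter, Finset.mem_range]
        constructor
        · rintro ⟨hℓp, hu⟩
          by_contra hA
          have := h ℓ hℓp
          simp only [hs, if_neg hA] at this
          split_ifs at this with h'
          · exact absurd this.2 (not_le.2 hu)
          · exact absurd (this.trans huu) (not_le.2 hu)
        · intro hA
          have hℓp : ℓ < p := Finset.mem_range.1 (hA'p (hAA' hA))
          have := h ℓ hℓp
          simp only [hs, if_pos hA] at this
          exact ⟨hℓp, this⟩
      · ext ℓ
        simp only [Finset.mem_filter, Finset.mem_range]
        constructor
        · rintro ⟨hℓp, hu⟩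
          by_contra hA'
          have hA : ℓ ∉ A := fun h' => hA' (hAA' h')
          have := h ℓ hℓp
          simp only [hs, if_neg hA, if_neg hA'] at this
          exact absurd this (not_le.2 hu)
        · intro hA'
          have hℓp : ℓ < p := Finset.mem_range.1 (hA'p hA')
          refine ⟨hℓp, ?_⟩
          have := h ℓ hℓp
          by_cases hA : ℓ ∈ A
          · simp only [hs, if_pos hA] at this
            exact lt_of_le_of_lt huu this
          · simp only [hs, if_neg hA, if_pos hA'] at this
            exact this.1
    · rintro ⟨hfA, hfA'⟩ ℓ hℓp
      simp only [hs]
      split_ifs with hA hA'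
      · have : ℓ ∈ (Finset.range p).filter fun ℓ => u < ξ ℓ ω := hfA ▸ hA
        exact (Finset.mem_filter.1 this).2
      · have h1 : ℓ ∈ (Finset.range p).filter fun ℓ => u' < ξ ℓ ω := hfA' ▸ hA'
        have h2 : ℓ ∉ (Finset.range p).filter fun ℓ => u < ξ ℓ ω := hfA ▸ hA
        refine ⟨(Finset.mem_filter.1 h1).2, ?_⟩
        by_contra hgt
        exact h2 (Finset.mem_filter.2 ⟨Finset.mem_range.2 hℓp, not_le.1 hgt⟩)
      · have h1 : ℓ ∉ (Finset.range p).filter fun ℓ => u' < ξ ℓ ω := hfA' ▸ hA'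
        by_contra hgt
        exact h1 (Finset.mem_filter.2 ⟨Finset.mem_range.2 hℓp, not_le.1 hgt⟩)
  set Q : Finset ((_ : Finset ℕ) × Finset ℕ) :=
    ((Finset.range p).powersetCard k').sigma (fun A' => A'.powersetCard k) with hQ
  have hQmem : ∀ q : (_ : Finset ℕ) × Finset ℕ, q ∈ Q ↔
      (q.1 ⊆ Finset.range p ∧ q.1.card = k') ∧ (q.2 ⊆ q.1 ∧ q.2.card = k) := by
    intro q
    simp [hQ, Finset.mem_sigma, Finset.mem_powersetCard]
  have hunion : {ω | ((Finset.range p).filter fun ℓ => u' < ξ ℓ ω).card = k' ∧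
           ((Finset.range p).filter fun ℓ => u < ξ ℓ ω).card = k}
      = ⋃ q ∈ Q, E q.1 q.2 := by
    ext ω
    simp only [Set.mem_setOf_eq, Set.mem_iUnion]
    constructor
    · rintro ⟨h1, h2⟩
      have hsub : ((Finset.range p).filter fun ℓ => u < ξ ℓ ω)
          ⊆ ((Finset.range p).filter fun ℓ => u' < ξ ℓ ω) := by
        intro ℓ hℓ
        rw [Finset.mem_filter] at hℓ ⊢
        exact ⟨hℓ.1, lt_of_le_of_lt huu hℓ.2⟩
      refine ⟨⟨(Finset.range p).filter fun ℓ => u' < ξ ℓ ω,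
        (Finset.range p).filter fun ℓ => u < ξ ℓ ω⟩, ?_, ?_⟩
      · rw [hQmem]
        exact ⟨⟨Finset.filter_subset _ _, h1⟩, hsub, h2⟩
      · rw [hE _ _ hsub (Finset.filter_subset _ _)]
        exact ⟨rfl, rfl⟩
    · rintro ⟨q, hq, hωq⟩
      rw [hQmem] at hq
      rw [hE _ _ hq.2.1 hq.1.1] at hωq
      obtain ⟨e2, e1⟩ := hωq
      exact ⟨e1 ▸ hq.1.2, e2 ▸ hq.2.2⟩
  have hmeasE : ∀ q : (_ : Finset ℕ) × Finset ℕ, MeasurableSet (E q.1 q.2) := by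
    intro q
    exact Set.Finite.measurableSet_biInter (Finset.range p).finite_toSet
      (fun ℓ _ => (hmeas ℓ) (hsm _ _ ℓ))
  have hdisj : (Q : Set ((_ : Finset ℕ) × Finset ℕ)).PairwiseDisjoint
      (fun q => E q.1 q.2) := by
    intro q hq r hr hqr
    simp only [Finset.mem_coe] at hq hr
    simp only [Function.onFun]
    rw [Set.disjoint_left]
    intro ω hωq hωr
    rw [hQmem] at hq hr
    rw [hE _ _ hq.2.1 hq.1.1] at hωq
    rw [hE _ _ hr.2.1 hr.1.1] at hωr
    exact hqr (Sigma.ext (hωq.2.symm.trans hωr.2) (heq_of_eq (hωq.1.symm.trans hωr.1)))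
  have hval : ∀ q ∈ Q, μ (E q.1 q.2) = q2 ^ k * q1 ^ (k' - k) * q0 ^ (p - k') := by
    intro q hq
    rw [hQmem] at hq
    obtain ⟨⟨hA'p, hA'c⟩, hAA', hAc⟩ := hq
    have hprod := hindep.measure_inter_preimage_eq_mul (Finset.range p)
      (sets := s q.1 q.2) (fun ℓ _ => hsm _ _ ℓ)
    rw [hEdef]
    rw [hprod]
    have e2 : ∀ ℓ ∈ q.2, μ (ξ ℓ ⁻¹' s q.1 q.2 ℓ) = q2 := by
      intro ℓ hℓ
      simp only [hs, if_pos hℓ]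
      exact hq2 ℓ
    have e1 : ∀ ℓ ∈ q.1 \ q.2, μ (ξ ℓ ⁻¹' s q.1 q.2 ℓ) = q1 := by
      intro ℓ hℓ
      obtain ⟨h1, h2⟩ := Finset.mem_sdiff.1 hℓ
      simp only [hs, if_neg h2, if_pos h1]
      exact hq1 ℓ
    have e0 : ∀ ℓ ∈ Finset.range p \ q.1, μ (ξ ℓ ⁻¹' s q.1 q.2 ℓ) = q0 := by
      intro ℓ hℓ
      obtain ⟨h1, h2⟩ := Finset.mem_sdiff.1 hℓ
      have h3 : ℓ ∉ q.2 := fun h => h2 (hAA' h)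
      simp only [hs, if_neg h3, if_neg h2]
      exact hq0 ℓ
    rw [← Finset.prod_sdiff hA'p, ← Finset.prod_sdiff hAA',
      Finset.prod_congr rfl e2, Finset.prod_congr rfl e1, Finset.prod_congr rfl e0,
      Finset.prod_const, Finset.prod_const, Finset.prod_const, hAc,
      Finset.card_sdiff_of_subset hAA', Finset.card_sdiff_of_subset hA'p, hA'c, hAc, Finset.card_range]
    ring
  rw [hunion, measure_biUnion_finset hdisj (fun q _ => hmeasE q),
    Finset.sum_congr rfl hval, Finset.sum_const, nsmul_eq_mul]
  congr 1
  rw [hQ, Finset.card_sigma]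
  push_cast
  rw [Finset.sum_congr rfl (fun A' hA' => ?_), Finset.sum_const, Finset.card_powersetCard,
    Finset.card_range, nsmul_eq_mul]
  rw [Finset.card_powersetCard, (Finset.mem_powersetCard.1 hA').2]

lemma stmt13_marg {Ω : Type*} [MeasurableSpace Ω] (μ : Measure Ω) [IsProbabilityMeasure μ]
    (lam : ℝ) (hlam : 0 < lam) (f : Ω → ℝ) (hf : Measurable f)
    (hcdf : ∀ y : ℝ, (μ {ω | f ω ≤ y}).toReal = 1 - Real.exp (-(lam * max y 0)))
    (u' u : ℝ) (h0 : 0 ≤ u') (huu : u' ≤ u) :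
    μ (f ⁻¹' Set.Iic u') = ENNReal.ofReal (1 - Real.exp (-(lam * u'))) ∧
    μ (f ⁻¹' Set.Ioc u' u) =
      ENNReal.ofReal (Real.exp (-(lam * u')) - Real.exp (-(lam * u))) ∧
    μ (f ⁻¹' Set.Ioi u) = ENNReal.ofReal (Real.exp (-(lam * u))) := by
  have h0u : 0 ≤ u := h0.trans huu
  have hIic : ∀ y : ℝ, 0 ≤ y →
      μ (f ⁻¹' Set.Iic y) = ENNReal.ofReal (1 - Real.exp (-(lam * y))) := by
    intro y hy
    have h1 : f ⁻¹' Set.Iic y = {ω | f ω ≤ y} := rfl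
    have h2 := hcdf y
    rw [max_eq_left hy] at h2
    rw [h1, ← h2, ENNReal.ofReal_toReal (measure_ne_top μ _)]
  have hexple : ∀ y : ℝ, 0 ≤ y → Real.exp (-(lam * y)) ≤ 1 := by
    intro y hy
    exact Real.exp_le_one_iff.2 (neg_nonpos.2 (mul_nonneg hlam.le hy))
  have hIoi : μ (f ⁻¹' Set.Ioi u) = ENNReal.ofReal (Real.exp (-(lam * u))) := by
    have hc : f ⁻¹' Set.Ioi u = (f ⁻¹' Set.Iic u)ᶜ := by
      ext ω; simp [not_le]
    rw [hc, prob_compl_eq_one_sub (hf measurableSet_Iic), hIic u h0u,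
      ← ENNReal.ofReal_one, ← ENNReal.ofReal_sub _ (by linarith [hexple u h0u, Real.exp_pos (-(lam*u))])]
    norm_num
  refine ⟨hIic u' h0, ?_, hIoi⟩
  have hunion : f ⁻¹' Set.Iic u' ∪ f ⁻¹' Set.Ioc u' u = f ⁻¹' Set.Iic u := by
    rw [← Set.preimage_union, Set.Iic_union_Ioc_eq_Iic huu]
  have hdisj : Disjoint (f ⁻¹' Set.Iic u') (f ⁻¹' Set.Ioc u' u) :=
    Disjoint.preimage f (Set.Iic_disjoint_Ioc le_rfl)
  have hadd := measure_union (μ := μ) hdisj (hf measurableSet_Ioc)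
  rw [hunion, hIic u h0u, hIic u' h0] at hadd
  have hmono : Real.exp (-(lam * u)) ≤ Real.exp (-(lam * u')) := by
    apply Real.exp_le_exp.2
    have : lam * u' ≤ lam * u := mul_le_mul_of_nonneg_left huu hlam.le
    linarith
  have hkey : ENNReal.ofReal (1 - Real.exp (-(lam * u')))
      + ENNReal.ofReal (Real.exp (-(lam * u')) - Real.exp (-(lam * u)))
      = ENNReal.ofReal (1 - Real.exp (-(lam * u))) := by
    rw [← ENNReal.ofReal_add (by linarith [hexple u' h0]) (by linarith)]
    ring_nf
  rw [← hkey] at hadd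
  exact (ENNReal.add_right_inj ENNReal.ofReal_ne_top).1 hadd.symm
/-- For i.i.d. `Exp(λ)` rvs, levels `u_p(y) = λ⁻¹(log p + y)` with fixed reals
`x' ≤ x` and fixed integers `k ≤ k'`, as `p → ∞`,
`P(S_p(u_p(x')) = k', S_p(u_p(x)) = k) →
  (e^{-kx}/k!) ((e^{-x'} - e^{-x})^{k'-k}/(k'-k)!) exp(-e^{-x'})`. -/
theorem stmt13 {Ω : Type*} [MeasurableSpace Ω] (μ : Measure Ω) [IsProbabilityMeasure μ]
    (lam : ℝ) (hlam : 0 < lam) (ξ : ℕ → Ω → ℝ) (hmeas : ∀ i, Measurable (ξ i))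
    (hindep : iIndepFun ξ μ)
    (hcdf : ∀ i (y : ℝ), (μ {ω | ξ i ω ≤ y}).toReal = 1 - Real.exp (-(lam * max y 0)))
    (x x' : ℝ) (hxx : x' ≤ x) (k k' : ℕ) (hk : k ≤ k') :
    Tendsto (fun p : ℕ =>
        (μ {ω | ((Finset.range p).filter fun ℓ => lam⁻¹ * (Real.log p + x') < ξ ℓ ω).card = k' ∧
                ((Finset.range p).filter fun ℓ => lam⁻¹ * (Real.log p + x) < ξ ℓ ω).card
                  = k}).toReal)
      atTop
      (𝓝 (Real.exp (-(k * x)) / k.factorial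
            * ((Real.exp (-x') - Real.exp (-x)) ^ (k' - k) / (k' - k).factorial)
            * Real.exp (-Real.exp (-x')))) := by
  set a := Real.exp (-x') with ha
  set r := a - Real.exp (-x) with hr
  have hr0 : 0 ≤ r := by
    have := Real.exp_le_exp.2 (neg_le_neg hxx)
    rw [hr, ha]; linarith
  set g : ℕ → ℝ := fun p =>
    ((p.choose k' * k'.choose k : ℕ) : ℝ) *
      ((Real.exp (-x) / p) ^ k * (r / p) ^ (k' - k) * (1 - a / p) ^ (p - k')) with hg
  set h : ℕ → ℝ := fun p =>
    ((p.descFactorial k' : ℝ) / (p : ℝ) ^ k') * ((k'.choose k : ℝ) / k'.factorial) *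
      (Real.exp (-x) ^ k * r ^ (k' - k)) * ((1 - a / p) ^ p / (1 - a / p) ^ k') with hh
  -- Step A: the probability equals g p eventually
  have hA : (fun p : ℕ =>
        (μ {ω | ((Finset.range p).filter fun ℓ => lam⁻¹ * (Real.log p + x') < ξ ℓ ω).card = k' ∧
                ((Finset.range p).filter fun ℓ => lam⁻¹ * (Real.log p + x) < ξ ℓ ω).card
                  = k}).toReal) =ᶠ[atTop] g := by
    filter_upwards [eventually_ge_atTop 1,
      tendsto_natCast_atTop_atTop.eventually_ge_atTop a] with p hp1 hp2
    have hppos : (0:ℝ) < p := by exact_mod_cast hp1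
    have hlog : 0 ≤ Real.log p + x' := by
      have := (Real.le_log_iff_exp_le hppos).2 hp2
      linarith
    set u' := lam⁻¹ * (Real.log p + x') with hu'
    set u := lam⁻¹ * (Real.log p + x) with hu
    have h0 : 0 ≤ u' := mul_nonneg (inv_nonneg.2 hlam.le) hlog
    have huu : u' ≤ u := by
      apply mul_le_mul_of_nonneg_left _ (inv_nonneg.2 hlam.le)
      linarith
    have hlu' : lam * u' = Real.log p + x' := by
      rw [hu']; field_simp
    have hlu : lam * u = Real.log p + x := by
      rw [hu]; field_simp
    have heu' : Real.exp (-(lam * u')) = a / p := by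
      rw [hlu', neg_add, Real.exp_add, Real.exp_neg, Real.exp_log hppos, ha]
      ring
    have heu : Real.exp (-(lam * u)) = Real.exp (-x) / p := by
      rw [hlu, neg_add, Real.exp_add, Real.exp_neg, Real.exp_log hppos]
      ring
    have hmarg := fun i => stmt13_marg μ lam hlam (ξ i) (hmeas i) (hcdf i) u' u h0 huu
    have hq0 : ∀ i, μ (ξ i ⁻¹' Set.Iic u') = ENNReal.ofReal (1 - a / p) := by
      intro i
      rw [(hmarg i).1, heu']
    have hq1 : ∀ i, μ (ξ i ⁻¹' Set.Ioc u' u) = ENNReal.ofReal (r / p) := by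
      intro i
      rw [(hmarg i).2.1]
      congr 1
      rw [heu', heu, hr]
      ring
    have hq2 : ∀ i, μ (ξ i ⁻¹' Set.Ioi u) = ENNReal.ofReal (Real.exp (-x) / p) := by
      intro i
      rw [(hmarg i).2.2, heu]
    have hexact := stmt13_exact μ ξ hmeas hindep u' u huu p k k' _ _ _ hq0 hq1 hq2
    rw [hexact, hg]
    have h2nn : (0:ℝ) ≤ Real.exp (-x) / p := by positivity
    have h1nn : (0:ℝ) ≤ r / p := by positivity
    have h0nn : (0:ℝ) ≤ 1 - a / p := by
      rw [sub_nonneg, div_le_one hppos]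
      exact hp2
    simp only [ENNReal.toReal_mul, ENNReal.toReal_pow, ENNReal.toReal_natCast,
      ENNReal.toReal_ofReal h2nn, ENNReal.toReal_ofReal h1nn, ENNReal.toReal_ofReal h0nn]
  -- Step B: g = h eventually
  have hB : g =ᶠ[atTop] h := by
    filter_upwards [eventually_ge_atTop (max 1 k'),
      tendsto_natCast_atTop_atTop.eventually_gt_atTop a] with p hp hpa
    have hp1 : 1 ≤ p := le_of_max_le_left hp
    have hpk' : k' ≤ p := le_of_max_le_right hp
    have hppos : (0:ℝ) < p := by exact_mod_cast hp1
    have hb : (0:ℝ) < 1 - a / p := by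
      rw [sub_pos, div_lt_one hppos]
      exact hpa
    have hcast : (p.descFactorial k' : ℝ) = (k'.factorial : ℝ) * (p.choose k') := by
      exact_mod_cast Nat.descFactorial_eq_factorial_mul_choose p k'
    have key : (Real.exp (-x) / p) ^ k * (r / p) ^ (k' - k)
        = (Real.exp (-x) ^ k * r ^ (k' - k)) / (p : ℝ) ^ k' := by
      rw [div_pow, div_pow, div_mul_div_comm, ← pow_add, Nat.add_sub_cancel' hk]
    rw [hg, hh]
    simp only []
    rw [key, hcast, pow_sub₀ _ hb.ne' hpk']
    push_cast
    have hfac0 : (k'.factorial : ℝ) ≠ 0 := Nat.cast_ne_zero.2 k'.factorial_ne_zero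
    have hstep : ((k'.factorial : ℝ) * (p.choose k' : ℝ)) / ((p:ℝ)) ^ k' *
          ((k'.choose k : ℝ) / (k'.factorial : ℝ))
        = ((p.choose k' : ℝ) * (k'.choose k : ℝ)) / ((p:ℝ)) ^ k' := by
      field_simp [hfac0, hppos.ne']
    rw [hstep]
    ring
  -- limits
  have T1 : Tendsto (fun p : ℕ => (p.descFactorial k' : ℝ) / (p : ℝ) ^ k') atTop (𝓝 1) := by
    have heq : ∀ᶠ p : ℕ in atTop, (p.descFactorial k' : ℝ) / (p : ℝ) ^ k'
        = ∏ i ∈ Finset.range k', (1 - (i : ℝ) / p) := by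
      filter_upwards [eventually_ge_atTop (max 1 k')] with p hp
      have hp1 : 1 ≤ p := le_of_max_le_left hp
      have hpk' : k' ≤ p := le_of_max_le_right hp
      have hppos : (0:ℝ) < p := by exact_mod_cast hp1
      rw [Nat.descFactorial_eq_prod_range, Nat.cast_prod,
        show ((p:ℝ)) ^ k' = ∏ _i ∈ Finset.range k', (p:ℝ) by simp,
        ← Finset.prod_div_distrib]
      apply Finset.prod_congr rfl
      intro i hi
      have hip : i ≤ p := le_trans (Finset.mem_range.1 hi).le hpk'
      rw [Nat.cast_sub hip, sub_div, div_self hppos.ne']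
    have htp : Tendsto (fun p : ℕ => ∏ i ∈ Finset.range k', (1 - (i : ℝ) / p)) atTop
        (𝓝 (∏ _i ∈ Finset.range k', (1:ℝ))) :=
      tendsto_finset_prod _ (fun i _ => by
        simpa using tendsto_const_nhds.sub (tendsto_const_div_atTop_nhds_zero_nat (i : ℝ)))
    have := Tendsto.congr' (heq.mono fun p hp => hp.symm) htp
    simpa using this
  have T4 : Tendsto (fun p : ℕ => (1 - a / p) ^ p / (1 - a / p) ^ k') atTop
      (𝓝 (Real.exp (-a))) := by
    have hnum : Tendsto (fun p : ℕ => (1 - a / p) ^ p) atTop (𝓝 (Real.exp (-a))) := by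
      refine (Real.tendsto_one_add_div_pow_exp (-a)).congr (fun p => ?_)
      rw [neg_div, ← sub_eq_add_neg]
    have hden : Tendsto (fun p : ℕ => (1 - a / p) ^ k') atTop (𝓝 1) := by
      have hbase : Tendsto (fun p : ℕ => 1 - a / p) atTop (𝓝 1) := by
        simpa using tendsto_const_nhds.sub (tendsto_const_div_atTop_nhds_zero_nat a)
      simpa using hbase.pow k'
    have := hnum.div hden one_ne_zero
    rw [div_one] at this
    exact this
  have hLh : Tendsto h atTop (𝓝 ((1:ℝ) * ((k'.choose k : ℝ) / k'.factorial) *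
      (Real.exp (-x) ^ k * r ^ (k' - k)) * Real.exp (-a))) :=
    ((T1.mul tendsto_const_nhds).mul tendsto_const_nhds).mul T4
  have hfac : (k'.choose k : ℝ) * k.factorial * (k' - k).factorial = k'.factorial := by
    exact_mod_cast Nat.choose_mul_factorial_mul_factorial hk
  have hexpk : Real.exp (-((k:ℝ) * x)) = Real.exp (-x) ^ k := by
    rw [show -((k:ℝ) * x) = (k:ℝ) * (-x) by ring, Real.exp_nat_mul]
  have hLval : (1:ℝ) * ((k'.choose k : ℝ) / k'.factorial) *
      (Real.exp (-x) ^ k * r ^ (k' - k)) * Real.exp (-a)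
      = Real.exp (-(k * x)) / k.factorial * (r ^ (k' - k) / (k' - k).factorial) *
        Real.exp (-a) := by
    have h2 : (k'.choose k : ℝ) / k'.factorial = 1 / (k.factorial * (k' - k).factorial) := by
      rw [div_eq_div_iff (Nat.cast_ne_zero.2 k'.factorial_ne_zero : (k'.factorial:ℝ) ≠ 0)
        (by positivity)]
      linear_combination hfac
    rw [h2, hexpk]
    ring
  rw [← hLval]
  exact Tendsto.congr' (hA.trans hB).symm hLh
end
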